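/- Let μ = 1/4. (a) If β ∈ (0, 1) then there exists ρ ∈ (0, min{1, ρ₀}) such that x ↦ δ(x)^{1/2}(log(1/δ(x)))^β is a super-harmonic of L_{1/4} on Ω_ρ; if β < 0 or β > 1 it is (for some such ρ) a sub-harmonic of L_{1/4} on Ω_ρ. (b) For every ε ∈ (0, 1) there exists ρ ∈ (0, min{1, ρ₀}) such that on Ω_ρ the functions δ^{1/2}(1 − (log(1/δ))^{−ε}) and δ^{1/2}·log(1/δ)·(1 + (log(1/δ))^{−ε}) are positive super-harmonics of L_{1/4}, while δ^{1/2}(1 + (log(1/δ))^{−ε}) and δ^{1/2}·log(1/δ)·(1 − (log(1/δ))^{−ε}) are positive sub-harmonics of L_{1/4}. -/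

import Mathlib

open Set Metric MeasureTheory Real

noncomputable section

/-- Distance to the boundary of `Ω`. -/
def bdist {N : ℕ} (Ω : Set (EuclideanSpace ℝ (Fin N))) (x : EuclideanSpace ℝ (Fin N)) : ℝ :=
  Metric.infDist x Ωᶜ

/-- The collar `Ω_ρ = {x ∈ Ω : δ(x) < ρ}`. -/
def collar {N : ℕ} (Ω : Set (EuclideanSpace ℝ (Fin N))) (ρ : ℝ) :
    Set (EuclideanSpace ℝ (Fin N)) :=
  {x ∈ Ω | bdist Ω x < ρ}

/-- The ring `Ω_{ε,ρ} = {x ∈ Ω : ε < δ(x) < ρ}`. -/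
def ring' {N : ℕ} (Ω : Set (EuclideanSpace ℝ (Fin N))) (ε ρ : ℝ) :
    Set (EuclideanSpace ℝ (Fin N)) :=
  {x ∈ Ω | ε < bdist Ω x ∧ bdist Ω x < ρ}

/-- The Laplacian. -/
def lap {N : ℕ} (f : EuclideanSpace ℝ (Fin N) → ℝ) (x : EuclideanSpace ℝ (Fin N)) : ℝ :=
  ∑ i : Fin N, fderiv ℝ (fun y => fderiv ℝ f y (EuclideanSpace.single i 1)) x
    (EuclideanSpace.single i 1)

/-- `ρ₀` is a good collar width: `δ` is `C²` on `Ω_{ρ₀}`, `|∇δ| = 1` there, `Δδ` bounded. -/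
def GoodCollar {N : ℕ} (Ω : Set (EuclideanSpace ℝ (Fin N))) (ρ₀ : ℝ) : Prop :=
  0 < ρ₀ ∧ ContDiffOn ℝ 2 (bdist Ω) (collar Ω ρ₀) ∧
    (∀ x ∈ collar Ω ρ₀, ‖gradient (bdist Ω) x‖ = 1) ∧
    ∃ M, ∀ x ∈ collar Ω ρ₀, |lap (bdist Ω) x| ≤ M

/-- A super-harmonic of `L_μ = -Δ - μ/δ²` on `G`. -/
def SuperHarm {N : ℕ} (Ω : Set (EuclideanSpace ℝ (Fin N))) (μ : ℝ)
    (G : Set (EuclideanSpace ℝ (Fin N))) (h : EuclideanSpace ℝ (Fin N) → ℝ) : Prop :=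
  ContDiffOn ℝ 2 h G ∧ ∀ x ∈ G, 0 ≤ -(lap h x) - μ / (bdist Ω x) ^ 2 * h x

/-- A sub-harmonic of `L_μ = -Δ - μ/δ²` on `G`. -/
def SubHarm {N : ℕ} (Ω : Set (EuclideanSpace ℝ (Fin N))) (μ : ℝ)
    (G : Set (EuclideanSpace ℝ (Fin N))) (h : EuclideanSpace ℝ (Fin N) → ℝ) : Prop :=
  ContDiffOn ℝ 2 h G ∧ ∀ x ∈ G, -(lap h x) - μ / (bdist Ω x) ^ 2 * h x ≤ 0

/-- A positive local super-harmonic of `L_μ`, defined on the collar `Ω_σ`. -/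
def PosSuperHarmOn {N : ℕ} (Ω : Set (EuclideanSpace ℝ (Fin N))) (μ σ : ℝ)
    (h : EuclideanSpace ℝ (Fin N) → ℝ) : Prop :=
  SuperHarm Ω μ (collar Ω σ) h ∧ ∀ x ∈ collar Ω σ, 0 < h x

/-- A sub-solution of `(*)`: `-Δu - (μ/δ²)u + u^p/δ^s = 0` on `G`. -/
def SubSol {N : ℕ} (Ω : Set (EuclideanSpace ℝ (Fin N))) (μ s p : ℝ)
    (G : Set (EuclideanSpace ℝ (Fin N))) (u : EuclideanSpace ℝ (Fin N) → ℝ) : Prop :=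
  ContDiffOn ℝ 2 u G ∧ (∀ x ∈ G, 0 ≤ u x) ∧
    ∀ x ∈ G, -(lap u x) - μ / (bdist Ω x) ^ 2 * u x + (u x) ^ p / (bdist Ω x) ^ s ≤ 0

/-- A super-solution of `(*)` on `G`. -/
def SuperSol {N : ℕ} (Ω : Set (EuclideanSpace ℝ (Fin N))) (μ s p : ℝ)
    (G : Set (EuclideanSpace ℝ (Fin N))) (u : EuclideanSpace ℝ (Fin N) → ℝ) : Prop :=
  ContDiffOn ℝ 2 u G ∧ (∀ x ∈ G, 0 < u x) ∧
    ∀ x ∈ G, 0 ≤ -(lap u x) - μ / (bdist Ω x) ^ 2 * u x + (u x) ^ p / (bdist Ω x) ^ s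

/-- A regularized distance `(d, c)` on `Ω`. -/
def RegDist {N : ℕ} (Ω : Set (EuclideanSpace ℝ (Fin N))) (d : EuclideanSpace ℝ (Fin N) → ℝ)
    (c : ℝ) : Prop :=
  1 ≤ c ∧ ContDiffOn ℝ 2 d Ω ∧ (∀ x ∈ Ω, 0 < d x) ∧
    (∀ x ∈ Ω, c⁻¹ * bdist Ω x ≤ d x ∧ d x ≤ c * bdist Ω x) ∧
    (∀ x ∈ Ω, ‖gradient d x‖ ≤ c) ∧ (∀ x ∈ Ω, |lap d x| ≤ c / d x)

def Ff (β t : ℝ) : ℝ := t ^ ((1:ℝ)/2) * (-Real.log t) ^ β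
def Ff1 (β t : ℝ) : ℝ :=
  t ^ (-(1:ℝ)/2) * ((1/2) * (-Real.log t) ^ β - β * (-Real.log t) ^ (β-1))
def Ff2 (β t : ℝ) : ℝ :=
  t ^ (-(3:ℝ)/2) * (-(1/4) * (-Real.log t) ^ β + β*(β-1) * (-Real.log t) ^ (β-2))

lemma log_pos' {t : ℝ} (ht : 0 < t) (h1 : t < 1) : 0 < -Real.log t := by
  simpa using Real.log_neg ht h1

lemma hasDerivAt_Ff (β : ℝ) {t : ℝ} (ht : 0 < t) (h1 : t < 1) :
    HasDerivAt (Ff β) (Ff1 β t) t := by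
  have hL : 0 < -Real.log t := log_pos' ht h1
  have hlog : HasDerivAt (fun s : ℝ => -Real.log s) (-(1/t)) t := by
    simpa [one_div] using (Real.hasDerivAt_log ht.ne').fun_neg
  have hpow : HasDerivAt (fun s : ℝ => s ^ ((1:ℝ)/2)) ((1/2) * t ^ ((1:ℝ)/2 - 1)) t :=
    Real.hasDerivAt_rpow_const (Or.inl ht.ne')
  have hLb : HasDerivAt (fun s : ℝ => (-Real.log s) ^ β)
      (β * (-Real.log t) ^ (β - 1) * (-(1/t))) t := by
    exact (Real.hasDerivAt_rpow_const (p := β) (Or.inl hL.ne')).comp t hlog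
  have := hpow.fun_mul hLb
  convert this using 1
  · rfl
  · rfl
  · rfl
  unfold Ff1
  have e1 : t ^ ((1:ℝ)/2 - 1) = t ^ (-(1:ℝ)/2) := by norm_num
  have e2 : t ^ ((1:ℝ)/2) * (1/t) = t ^ (-(1:ℝ)/2) := by
    have h : (1:ℝ)/t = t ^ (-1:ℝ) := by rw [Real.rpow_neg_one, one_div]
    rw [h, ← Real.rpow_add ht]; norm_num
  rw [e1]
  calc t ^ (-(1:ℝ)/2) * ((1/2) * (-Real.log t) ^ β - β * (-Real.log t) ^ (β-1))
      = (1/2) * t ^ (-(1:ℝ)/2) * (-Real.log t) ^ β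
        - (t ^ ((1:ℝ)/2) * (1/t)) * (β * (-Real.log t) ^ (β-1)) := by rw [e2]; ring
    _ = _ := by ring

lemma hasDerivAt_Ff1 (β : ℝ) {t : ℝ} (ht : 0 < t) (h1 : t < 1) :
    HasDerivAt (Ff1 β) (Ff2 β t) t := by
  have hL : 0 < -Real.log t := log_pos' ht h1
  have hlog : HasDerivAt (fun s : ℝ => -Real.log s) (-(1/t)) t := by
    simpa [one_div] using (Real.hasDerivAt_log ht.ne').fun_neg
  have hpow : HasDerivAt (fun s : ℝ => s ^ (-(1:ℝ)/2)) ((-(1:ℝ)/2) * t ^ (-(1:ℝ)/2 - 1)) t :=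
    Real.hasDerivAt_rpow_const (Or.inl ht.ne')
  have hLb : HasDerivAt (fun s : ℝ => (-Real.log s) ^ β)
      (β * (-Real.log t) ^ (β - 1) * (-(1/t))) t := by
    exact (Real.hasDerivAt_rpow_const (p := β) (Or.inl hL.ne')).comp t hlog
  have hLb1 : HasDerivAt (fun s : ℝ => (-Real.log s) ^ (β-1))
      ((β-1) * (-Real.log t) ^ (β - 1 - 1) * (-(1/t))) t := by
    exact (Real.hasDerivAt_rpow_const (p := β-1) (Or.inl hL.ne')).comp t hlog
  have hg : HasDerivAt (fun s : ℝ => (1/2) * (-Real.log s) ^ β - β * (-Real.log s) ^ (β-1))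
      ((1/2) * (β * (-Real.log t) ^ (β - 1) * (-(1/t)))
        - β * ((β-1) * (-Real.log t) ^ (β - 1 - 1) * (-(1/t)))) t :=
    (hLb.const_mul _).sub (hLb1.const_mul _)
  have := hpow.fun_mul hg
  convert this using 1
  · rfl
  · rfl
  · rfl
  unfold Ff2
  have e1 : t ^ (-(1:ℝ)/2 - 1) = t ^ (-(3:ℝ)/2) := by norm_num
  have e2 : t ^ (-(1:ℝ)/2) * (1/t) = t ^ (-(3:ℝ)/2) := by
    have h : (1:ℝ)/t = t ^ (-1:ℝ) := by rw [Real.rpow_neg_one, one_div]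
    rw [h, ← Real.rpow_add ht]; norm_num
  have e3 : (β : ℝ) - 1 - 1 = β - 2 := by ring
  rw [e1, e3] at *
  calc t ^ (-(3:ℝ)/2) * (-(1/4) * (-Real.log t) ^ β + β*(β-1) * (-Real.log t) ^ (β-2))
      = (-(1:ℝ)/2) * t ^ (-(3:ℝ)/2) * ((1/2) * (-Real.log t) ^ β - β * (-Real.log t) ^ (β-1))
        + (t ^ (-(1:ℝ)/2) * (1/t)) * (-(1/2) * (β * (-Real.log t) ^ (β-1))
            + β * ((β-1) * (-Real.log t) ^ (β-2))) := by
        rw [e2]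
        ring
    _ = _ := by ring

lemma contOn_Ff2 (β : ℝ) : ContinuousOn (Ff2 β) (Set.Ioo 0 1) := by
  intro t ht
  obtain ⟨h0, h1⟩ := ht
  apply ContinuousAt.continuousWithinAt
  have hL : 0 < -Real.log t := log_pos' h0 h1
  have hc1 : ContinuousAt (fun s : ℝ => s ^ (-(3:ℝ)/2)) t :=
    Real.continuousAt_rpow_const _ _ (Or.inl h0.ne')
  have hlog : ContinuousAt (fun s : ℝ => -Real.log s) t := (Real.continuousAt_log h0.ne').neg
  have hc2 : ContinuousAt (fun s : ℝ => (-Real.log s) ^ β) t :=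
    hlog.rpow_const (Or.inl hL.ne')
  have hc3 : ContinuousAt (fun s : ℝ => (-Real.log s) ^ (β-2)) t :=
    hlog.rpow_const (Or.inl hL.ne')
  exact hc1.mul ((continuousAt_const.mul hc2).add (continuousAt_const.mul hc3))

lemma keyIdentity (β : ℝ) {t : ℝ} (ht : 0 < t) (h1 : t < 1) :
    -(Ff2 β t) - (1/4)/t^2 * Ff β t
      = (β*(1-β)) * (t ^ (-(3:ℝ)/2) * (-Real.log t) ^ (β-2)) := by
  have h2 : (t:ℝ)^2 = t^(2:ℝ) := by
    rw [← Real.rpow_natCast t 2]; norm_num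
  have e0 : t ^ ((1:ℝ)/2) / t^2 = t ^ (-(3:ℝ)/2) := by
    rw [h2, ← Real.rpow_sub ht]; norm_num
  have e : (1/4)/t^2 * Ff β t = (1/4) * (t ^ (-(3:ℝ)/2) * (-Real.log t) ^ β) := by
    unfold Ff
    rw [show (1/4)/t^2 * (t ^ ((1:ℝ)/2) * (-Real.log t) ^ β)
      = (1/4) * (t ^ ((1:ℝ)/2) / t^2 * (-Real.log t) ^ β) by ring, e0]
  rw [e]; unfold Ff2; ring

lemma one_le_negLog {t : ℝ} (ht : 0 < t) (hte : t ≤ Real.exp (-1)) : 1 ≤ -Real.log t := by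
  have := Real.log_le_log ht hte
  rw [Real.log_exp] at this
  linarith

lemma neg_log_le {t k : ℝ} (ht : 0 < t) (hk : 0 < k) :
    -Real.log t ≤ k * t ^ (-(1:ℝ)/k) := by
  have hu : 0 < t ^ (-(1:ℝ)/k) := Real.rpow_pos_of_pos ht _
  have h1 : Real.log (t ^ (-(1:ℝ)/k : ℝ)) = (-(1:ℝ)/k) * Real.log t := Real.log_rpow ht _
  have h2 : Real.log (t ^ (-(1:ℝ)/k : ℝ)) ≤ t ^ (-(1:ℝ)/k : ℝ) :=
    (Real.log_le_sub_one_of_pos hu).trans (by linarith)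
  rw [h1] at h2
  have : -Real.log t = k * ((-(1:ℝ)/k) * Real.log t) := by field_simp
  rw [this]
  exact mul_le_mul_of_nonneg_left h2 hk.le

lemma t_mul_L_cube {t : ℝ} (ht : 0 < t) (hte : t ≤ Real.exp (-1)) :
    t * (-Real.log t) ^ (3:ℝ) ≤ 216 * t ^ ((1:ℝ)/2) := by
  have hL1 : 1 ≤ -Real.log t := one_le_negLog ht hte
  have hb : -Real.log t ≤ 6 * t ^ (-(1:ℝ)/6) := neg_log_le ht (by norm_num)
  have h0 : (0:ℝ) ≤ -Real.log t := by linarith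
  have h3 : (-Real.log t)^(3:ℝ) ≤ (6 * t ^ (-(1:ℝ)/6))^(3:ℝ) :=
    Real.rpow_le_rpow h0 hb (by norm_num)
  have he : (6 * t ^ (-(1:ℝ)/6))^(3:ℝ) = 216 * t ^ (-(1:ℝ)/2) := by
    rw [Real.mul_rpow (by norm_num) (Real.rpow_nonneg ht.le _),
      ← Real.rpow_mul ht.le]
    norm_num
  rw [he] at h3
  have hts : t * t ^ (-(1:ℝ)/2) = t ^ ((1:ℝ)/2) := by
    nth_rewrite 1 [← Real.rpow_one t]
    rw [← Real.rpow_add ht]; norm_num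
  calc t * (-Real.log t) ^ (3:ℝ) ≤ t * (216 * t ^ (-(1:ℝ)/2)) :=
        mul_le_mul_of_nonneg_left h3 ht.le
    _ = 216 * (t * t ^ (-(1:ℝ)/2)) := by ring
    _ = 216 * t ^ ((1:ℝ)/2) := by rw [hts]

lemma Ff1_bound (β m : ℝ) {t : ℝ} (ht : 0 < t) (hte : t ≤ Real.exp (-1)) (hm : β ≤ m + 3) :
    |Ff1 β t| ≤ (1/2 + |β|) *
      ((t ^ (-(3:ℝ)/2) * (-Real.log t) ^ m) * (t * (-Real.log t) ^ (3:ℝ))) := by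
  set L := -Real.log t with hLdef
  have hL1 : 1 ≤ L := one_le_negLog ht hte
  have hL0 : 0 < L := by linarith
  have b1 : L^β ≤ L^m * L^(3:ℝ) := by
    rw [← Real.rpow_add hL0]
    exact Real.rpow_le_rpow_of_exponent_le hL1 (by linarith)
  have b2 : L^(β-1) ≤ L^m * L^(3:ℝ) := by
    rw [← Real.rpow_add hL0]
    exact Real.rpow_le_rpow_of_exponent_le hL1 (by linarith)
  have key : (1/2) * L^β + |β| * L^(β-1) ≤ (1/2 + |β|) * (L^m * L^(3:ℝ)) := by
    nlinarith [abs_nonneg β, b1, b2]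
  have habs : |Ff1 β t| ≤ t ^ (-(1:ℝ)/2) * ((1/2) * L^β + |β| * L^(β-1)) := by
    unfold Ff1
    rw [abs_mul, abs_of_nonneg (Real.rpow_nonneg ht.le _)]
    apply mul_le_mul_of_nonneg_left _ (Real.rpow_nonneg ht.le _)
    refine (abs_sub _ _).trans ?_
    rw [abs_mul, abs_mul, abs_of_nonneg (Real.rpow_nonneg hL0.le β),
      abs_of_nonneg (Real.rpow_nonneg hL0.le (β-1)),
      abs_of_nonneg (show (0:ℝ) ≤ 1/2 by norm_num)]
  have tsplit : t ^ (-(1:ℝ)/2) = t ^ (-(3:ℝ)/2) * t := by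
    nth_rewrite 3 [← Real.rpow_one t]
    rw [← Real.rpow_add ht]; norm_num
  calc |Ff1 β t| ≤ t ^ (-(1:ℝ)/2) * ((1/2) * L^β + |β| * L^(β-1)) := habs
    _ ≤ t ^ (-(1:ℝ)/2) * ((1/2 + |β|) * (L^m * L^(3:ℝ))) :=
        mul_le_mul_of_nonneg_left key (Real.rpow_nonneg ht.le _)
    _ = (1/2 + |β|) * ((t ^ (-(3:ℝ)/2) * L ^ m) * (t * L ^ (3:ℝ))) := by
        rw [tsplit]; ring

lemma numer {M c K t : ℝ} (hM : 0 ≤ M) (hc : 0 ≤ c) (hK : 0 < K) (ht : 0 < t)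
    (htK : t ≤ (K/(216*M*c+1))^2) : M * c * 216 * t ^ ((1:ℝ)/2) ≤ K := by
  set C : ℝ := 216*M*c+1 with hCdef
  have hC : 0 < C := by positivity
  have hKC : 0 ≤ K/C := by positivity
  have hpow : ((K/C)^2 : ℝ) ^ ((1:ℝ)/2) = K/C := by
    rw [← Real.rpow_natCast (K/C) 2, ← Real.rpow_mul hKC]
    norm_num
  have h12 : t ^ ((1:ℝ)/2) ≤ K/C := by
    have h := Real.rpow_le_rpow ht.le htK (by norm_num : (0:ℝ) ≤ 1/2)
    rwa [hpow] at h
  calc M*c*216*t^((1:ℝ)/2) ≤ M*c*216*(K/C) :=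
        mul_le_mul_of_nonneg_left h12 (by positivity)
    _ ≤ K := by
        rw [show M*c*216*(K/C) = (216*M*c)*K/C by ring, div_le_iff₀ hC]
        nlinarith

lemma estimate_chain {M c K W X t : ℝ} (hM : 0 ≤ M) (hc : 0 ≤ c) (hX : 0 ≤ X)
    (ht : 0 < t) (hte : t ≤ Real.exp (-1))
    (hW : |W| ≤ c * (X * (t * (-Real.log t) ^ (3:ℝ))))
    (hnum : M * c * 216 * t ^ ((1:ℝ)/2) ≤ K) :
    M * |W| ≤ K * X := by
  have hcube := t_mul_L_cube ht hte
  calc M*|W| ≤ M * (c * (X * (t * (-Real.log t) ^ (3:ℝ)))) := mul_le_mul_of_nonneg_left hW hM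
    _ ≤ M * (c * (X * (216 * t^((1:ℝ)/2)))) := by
        apply mul_le_mul_of_nonneg_left
          (mul_le_mul_of_nonneg_left (mul_le_mul_of_nonneg_left hcube hX) hc) hM
    _ = (M*c*216*t^((1:ℝ)/2)) * X := by ring
    _ ≤ K*X := mul_le_mul_of_nonneg_right hnum hX

lemma Ff1_sum_bound (β γ σ : ℝ) {t : ℝ} (ht : 0 < t) (hte : t ≤ Real.exp (-1))
    (hσ : |σ| ≤ 1) (hβ : |β| ≤ 1) (hγ : |γ| ≤ 1) (hβγ : β ≤ γ + 1) :
    |Ff1 β t + σ * Ff1 γ t| ≤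
      3 * ((t ^ (-(3:ℝ)/2) * (-Real.log t) ^ (γ-2)) * (t * (-Real.log t) ^ (3:ℝ))) := by
  have hb1 := Ff1_bound β (γ-2) ht hte (by linarith)
  have hb2 := Ff1_bound γ (γ-2) ht hte (by linarith)
  have hL0 : (0:ℝ) ≤ -Real.log t := by linarith [one_le_negLog ht hte]
  have hX : 0 ≤ (t ^ (-(3:ℝ)/2) * (-Real.log t) ^ (γ-2)) * (t * (-Real.log t) ^ (3:ℝ)) := by
    have := Real.rpow_nonneg ht.le (-(3:ℝ)/2)
    have := Real.rpow_nonneg hL0 (γ-2)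
    have := Real.rpow_nonneg hL0 (3:ℝ)
    positivity
  calc |Ff1 β t + σ * Ff1 γ t| ≤ |Ff1 β t| + |σ| * |Ff1 γ t| := by
        rw [← abs_mul]; exact abs_add_le _ _
    _ ≤ |Ff1 β t| + |Ff1 γ t| := by
        nlinarith [abs_nonneg (Ff1 γ t)]
    _ ≤ 3 * ((t ^ (-(3:ℝ)/2) * (-Real.log t) ^ (γ-2)) * (t * (-Real.log t) ^ (3:ℝ))) := by
        nlinarith [hb1, hb2, hX]
lemma collar_isOpen {N : ℕ} (Ω : Set (EuclideanSpace ℝ (Fin N))) (hΩ : IsOpen Ω) (ρ : ℝ) :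
    IsOpen (collar Ω ρ) := by
  have : collar Ω ρ = Ω ∩ (bdist Ω) ⁻¹' (Iio ρ) := rfl
  rw [this]
  exact hΩ.inter (IsOpen.preimage (continuous_infDist_pt _) isOpen_Iio)

lemma bdist_pos {N : ℕ} (hN : 2 ≤ N) (Ω : Set (EuclideanSpace ℝ (Fin N))) (hΩ : IsOpen Ω)
    (hΩb : Bornology.IsBounded Ω) {x : EuclideanSpace ℝ (Fin N)} (hx : x ∈ Ω) :
    0 < bdist Ω x := by
  have hnt : Nontrivial (EuclideanSpace ℝ (Fin N)) := by
    have : Nonempty (Fin N) := ⟨⟨0, by omega⟩⟩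
    infer_instance
  have hne : Ωᶜ.Nonempty := by
    by_contra h
    rw [Set.not_nonempty_iff_eq_empty, Set.compl_empty_iff] at h
    subst h
    exact NormedSpace.unbounded_univ ℝ (EuclideanSpace ℝ (Fin N)) hΩb
  exact (hΩ.isClosed_compl.notMem_iff_infDist_pos hne).1 (by simpa using hx)

lemma lap_congr {N : ℕ} {f g : EuclideanSpace ℝ (Fin N) → ℝ} {x : EuclideanSpace ℝ (Fin N)}
    (h : f =ᶠ[nhds x] g) : lap f x = lap g x := by
  unfold lap
  refine Finset.sum_congr rfl fun i _ => ?_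
  have h1 : (fun y => fderiv ℝ f y (EuclideanSpace.single i 1)) =ᶠ[nhds x]
      (fun y => fderiv ℝ g y (EuclideanSpace.single i 1)) := by
    filter_upwards [h.fderiv (𝕜 := ℝ)] with y hy using by rw [hy]
  rw [h1.fderiv_eq]

section chain
variable {N : ℕ}
local notation "E" => EuclideanSpace ℝ (Fin N)

lemma sum_fderiv_sq_eq_grad {d : E → ℝ} {x : E} :
    ∑ i : Fin N, (fderiv ℝ d x (EuclideanSpace.single i 1))^2 = ‖gradient d x‖^2 := by
  have h : ∀ v : E, fderiv ℝ d x v = inner ℝ (gradient d x) v := by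
    intro v
    rw [gradient]
    rw [show (fderiv ℝ d x) v = ((InnerProductSpace.toDual ℝ E)
      ((InnerProductSpace.toDual ℝ E).symm (fderiv ℝ d x))) v by
        rw [LinearIsometryEquiv.apply_symm_apply]]
    rfl
  simp only [h, EuclideanSpace.inner_single_right, RCLike.conj_to_real, mul_one]
  rw [EuclideanSpace.norm_eq]
  rw [Real.sq_sqrt (by positivity)]
  simp [Real.norm_eq_abs, sq_abs]

lemma lap_comp {d : E → ℝ} {G : Set E} (hG : IsOpen G) (hd : ContDiffOn ℝ 2 d G)
    {f f' f'' : ℝ → ℝ} {I : Set ℝ} (hmap : Set.MapsTo d G I)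
    (hf' : ∀ t ∈ I, HasDerivAt f (f' t) t) (hf'' : ∀ t ∈ I, HasDerivAt f' (f'' t) t)
    {x : E} (hx : x ∈ G) :
    lap (fun y => f (d y)) x
      = f'' (d x) * ∑ i : Fin N, (fderiv ℝ d x (EuclideanSpace.single i 1))^2
        + f' (d x) * lap d x := by
  have hdx : ∀ y ∈ G, DifferentiableAt ℝ d y := fun y hy =>
    (hd.differentiableOn (by norm_num)).differentiableAt (hG.mem_nhds hy)
  have hfd : ∀ y ∈ G, HasFDerivAt (fun z => f (d z)) (f' (d y) • fderiv ℝ d y) y := fun y hy =>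
    (hf' _ (hmap hy)).comp_hasFDerivAt y ((hdx y hy).hasFDerivAt)
  -- differentiability of y ↦ fderiv d y
  have hfd1 : DifferentiableAt ℝ (fun y => fderiv ℝ d y) x := by
    have h1 : ContDiffOn ℝ 1 (fun y => fderiv ℝ d y) G :=
      hd.fderiv_of_isOpen hG (by norm_num)
    exact (h1.differentiableOn (by norm_num)).differentiableAt (hG.mem_nhds hx)
  have hA : HasFDerivAt (fun y => f' (d y)) (f'' (d x) • fderiv ℝ d x) x :=
    (hf'' _ (hmap hx)).comp_hasFDerivAt x ((hdx x hx).hasFDerivAt)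
  unfold lap
  rw [Finset.mul_sum, Finset.mul_sum, ← Finset.sum_add_distrib]
  refine Finset.sum_congr rfl fun i _ => ?_
  set v : E := EuclideanSpace.single i 1 with hv
  have hB : DifferentiableAt ℝ (fun y => fderiv ℝ d y v) x :=
    hfd1.clm_apply (differentiableAt_const v)
  have e1 : (fun y => fderiv ℝ (fun z => f (d z)) y v) =ᶠ[nhds x]
      (fun y => f' (d y) * (fderiv ℝ d y v)) := by
    filter_upwards [hG.mem_nhds hx] with y hy
    rw [(hfd y hy).fderiv]; rfl
  rw [e1.fderiv_eq]
  rw [fderiv_fun_mul (hA.differentiableAt) hB]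
  rw [ContinuousLinearMap.add_apply, ContinuousLinearMap.smul_apply,
    ContinuousLinearMap.smul_apply, hA.fderiv, ContinuousLinearMap.smul_apply]
  simp only [smul_eq_mul]; ring
end chain

lemma contDiffOn_of_derivs {f f' f'' : ℝ → ℝ} {I : Set ℝ} (hI : IsOpen I)
    (hf' : ∀ t ∈ I, HasDerivAt f (f' t) t) (hf'' : ∀ t ∈ I, HasDerivAt f' (f'' t) t)
    (hc : ContinuousOn f'' I) : ContDiffOn ℝ 2 f I := by
  have e1 : Set.EqOn (deriv f) f' I := fun t ht => (hf' t ht).deriv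
  have e2 : Set.EqOn (deriv f') f'' I := fun t ht => (hf'' t ht).deriv
  have h1 : ContDiffOn ℝ 1 f' I := by
    rw [show (1 : WithTop ℕ∞) = 0 + 1 by norm_num, contDiffOn_succ_iff_deriv_of_isOpen hI]
    refine ⟨fun t ht => ((hf'' t ht).differentiableAt.differentiableWithinAt), by simp, ?_⟩
    rw [contDiffOn_zero]
    exact hc.congr e2
  rw [show (2 : WithTop ℕ∞) = 1 + 1 by norm_num, contDiffOn_succ_iff_deriv_of_isOpen hI]
  exact ⟨fun t ht => ((hf' t ht).differentiableAt.differentiableWithinAt), (by simp),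
    h1.congr e1⟩

section master
variable {N : ℕ} {Ω : Set (EuclideanSpace ℝ (Fin N))}

lemma superHarm_congr {μ : ℝ} {G : Set (EuclideanSpace ℝ (Fin N))} (hG : IsOpen G)
    {h h' : EuclideanSpace ℝ (Fin N) → ℝ} (heq : Set.EqOn h h' G)
    (H : SuperHarm Ω μ G h') : SuperHarm Ω μ G h := by
  obtain ⟨hc, hi⟩ := H
  refine ⟨hc.congr heq, fun x hx => ?_⟩
  have he : h =ᶠ[nhds x] h' := Filter.eventuallyEq_of_mem (hG.mem_nhds hx) heq
  rw [heq hx, lap_congr he]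
  exact hi x hx

lemma subHarm_congr {μ : ℝ} {G : Set (EuclideanSpace ℝ (Fin N))} (hG : IsOpen G)
    {h h' : EuclideanSpace ℝ (Fin N) → ℝ} (heq : Set.EqOn h h' G)
    (H : SubHarm Ω μ G h') : SubHarm Ω μ G h := by
  obtain ⟨hc, hi⟩ := H
  refine ⟨hc.congr heq, fun x hx => ?_⟩
  have he : h =ᶠ[nhds x] h' := Filter.eventuallyEq_of_mem (hG.mem_nhds hx) heq
  rw [heq hx, lap_congr he]
  exact hi x hx

variable (hN : 2 ≤ N) (hΩo : IsOpen Ω) (hΩb : Bornology.IsBounded Ω) {ρ₀ : ℝ}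
  (hdC2 : ContDiffOn ℝ 2 (bdist Ω) (collar Ω ρ₀))
  (hgrad : ∀ x ∈ collar Ω ρ₀, ‖gradient (bdist Ω) x‖ = 1)
  {M : ℝ} (hM : ∀ x ∈ collar Ω ρ₀, |lap (bdist Ω) x| ≤ M)
  {f f' f'' : ℝ → ℝ}
  (hd1 : ∀ t ∈ Set.Ioo (0:ℝ) 1, HasDerivAt f (f' t) t)
  (hd2 : ∀ t ∈ Set.Ioo (0:ℝ) 1, HasDerivAt f' (f'' t) t)
  (hcf : ContinuousOn f'' (Set.Ioo 0 1))
  {ρ : ℝ} (hρ1 : ρ ≤ 1) (hρρ₀ : ρ ≤ ρ₀)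

include hN hΩo hΩb hdC2 hgrad hM hd1 hd2 hcf hρ1 hρρ₀ in
lemma superHarm_comp
    (hEst : ∀ t ∈ Set.Ioo (0:ℝ) ρ, M * |f' t| ≤ -(f'' t) - (1/4)/t^2 * f t) :
    SuperHarm Ω (1/4) (collar Ω ρ) (fun x => f (bdist Ω x)) := by
  have hsub : collar Ω ρ ⊆ collar Ω ρ₀ := fun x hx => ⟨hx.1, lt_of_lt_of_le hx.2 hρρ₀⟩
  have hGopen := collar_isOpen Ω hΩo ρ
  have hmap : Set.MapsTo (bdist Ω) (collar Ω ρ) (Set.Ioo 0 1) := fun x hx =>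
    ⟨bdist_pos hN Ω hΩo hΩb hx.1, lt_of_lt_of_le hx.2 hρ1⟩
  have hdG := hdC2.mono hsub
  refine ⟨(contDiffOn_of_derivs isOpen_Ioo hd1 hd2 hcf).comp hdG hmap, ?_⟩
  intro x hx
  have hlap := lap_comp hGopen hdG hmap hd1 hd2 hx
  rw [sum_fderiv_sq_eq_grad, hgrad x (hsub hx)] at hlap
  set t := bdist Ω x with htdef
  have ht : t ∈ Set.Ioo (0:ℝ) ρ := ⟨bdist_pos hN Ω hΩo hΩb hx.1, hx.2⟩
  have h1 := hEst t ht
  have h2 := hM x (hsub hx)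
  have h3 : |f' t * lap (bdist Ω) x| ≤ M * |f' t| := by
    rw [abs_mul, mul_comm]
    exact mul_le_mul_of_nonneg_right h2 (abs_nonneg _)
  have h4 := neg_abs_le (f' t * lap (bdist Ω) x)
  have h5 := le_abs_self (f' t * lap (bdist Ω) x)
  rw [hlap]
  have : (1:ℝ)^2 = 1 := one_pow 2
  rw [this]
  have hgoal : -(f'' t * 1 + f' t * lap (bdist Ω) x) - 1 / 4 / t ^ 2 * f t
      = (-(f'' t) - (1/4)/t^2 * f t) - f' t * lap (bdist Ω) x := by ring
  rw [hgoal]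
  linarith

include hN hΩo hΩb hdC2 hgrad hM hd1 hd2 hcf hρ1 hρρ₀ in
lemma subHarm_comp
    (hEst : ∀ t ∈ Set.Ioo (0:ℝ) ρ, M * |f' t| ≤ (f'' t) + (1/4)/t^2 * f t) :
    SubHarm Ω (1/4) (collar Ω ρ) (fun x => f (bdist Ω x)) := by
  have hsub : collar Ω ρ ⊆ collar Ω ρ₀ := fun x hx => ⟨hx.1, lt_of_lt_of_le hx.2 hρρ₀⟩
  have hGopen := collar_isOpen Ω hΩo ρ
  have hmap : Set.MapsTo (bdist Ω) (collar Ω ρ) (Set.Ioo 0 1) := fun x hx =>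
    ⟨bdist_pos hN Ω hΩo hΩb hx.1, lt_of_lt_of_le hx.2 hρ1⟩
  have hdG := hdC2.mono hsub
  refine ⟨(contDiffOn_of_derivs isOpen_Ioo hd1 hd2 hcf).comp hdG hmap, ?_⟩
  intro x hx
  have hlap := lap_comp hGopen hdG hmap hd1 hd2 hx
  rw [sum_fderiv_sq_eq_grad, hgrad x (hsub hx)] at hlap
  set t := bdist Ω x with htdef
  have ht : t ∈ Set.Ioo (0:ℝ) ρ := ⟨bdist_pos hN Ω hΩo hΩb hx.1, hx.2⟩
  have h1 := hEst t ht
  have h2 := hM x (hsub hx)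
  have h3 : |f' t * lap (bdist Ω) x| ≤ M * |f' t| := by
    rw [abs_mul, mul_comm]
    exact mul_le_mul_of_nonneg_right h2 (abs_nonneg _)
  have h4 := le_abs_self (f' t * lap (bdist Ω) x)
  have h5 := neg_abs_le (f' t * lap (bdist Ω) x)
  rw [hlap]
  have : (1:ℝ)^2 = 1 := one_pow 2
  rw [this]
  have hgoal : -(f'' t * 1 + f' t * lap (bdist Ω) x) - 1 / 4 / t ^ 2 * f t
      = -((f'' t) + (1/4)/t^2 * f t) - f' t * lap (bdist Ω) x := by ring
  rw [hgoal]
  linarith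
end master

lemma exp_neg_one_lt_one : Real.exp (-1) < 1 := by
  rw [← Real.exp_zero]
  exact Real.exp_lt_exp.2 (by norm_num)

lemma pick_rho {ρ₀ K M c : ℝ} (hρ₀ : 0 < ρ₀) (hK : 0 < K) (hM : 0 ≤ M) (hc : 0 ≤ c) :
    ∃ ρ, 0 < ρ ∧ ρ < min 1 ρ₀ ∧ ρ ≤ 1 ∧ ρ ≤ ρ₀ ∧ ρ ≤ Real.exp (-1) ∧
      ρ ≤ (K/(216*M*c+1))^2 := by
  have hmin : 0 < min 1 ρ₀ := lt_min one_pos hρ₀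
  have hC : (0:ℝ) < 216*M*c+1 := by positivity
  have hKC : 0 < (K/(216*M*c+1))^2 := by positivity
  refine ⟨min ((min 1 ρ₀)/2) (min (Real.exp (-1)) ((K/(216*M*c+1))^2)), ?_, ?_, ?_, ?_, ?_, ?_⟩
  · exact lt_min (by linarith) (lt_min (Real.exp_pos _) hKC)
  · exact lt_of_le_of_lt (min_le_left _ _) (half_lt_self hmin)
  · exact le_trans (min_le_left _ _) ((half_le_self hmin.le).trans (min_le_left 1 ρ₀))
  · exact le_trans (min_le_left _ _) ((half_le_self hmin.le).trans (min_le_right 1 ρ₀))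
  · exact le_trans (min_le_right _ _) (min_le_left _ _)
  · exact le_trans (min_le_right _ _) (min_le_right _ _)

section assembly
variable {N : ℕ} {Ω : Set (EuclideanSpace ℝ (Fin N))}
  (hN : 2 ≤ N) (hΩo : IsOpen Ω) (hΩb : Bornology.IsBounded Ω) {ρ₀ : ℝ}
  (hdC2 : ContDiffOn ℝ 2 (bdist Ω) (collar Ω ρ₀))
  (hgrad : ∀ x ∈ collar Ω ρ₀, ‖gradient (bdist Ω) x‖ = 1)
  {M : ℝ} (hM : ∀ x ∈ collar Ω ρ₀, |lap (bdist Ω) x| ≤ M) (hM0 : 0 ≤ M)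
  {ρ : ℝ} (hρ1 : ρ ≤ 1) (hρρ₀ : ρ ≤ ρ₀) (hρe : ρ ≤ Real.exp (-1))

include hN hΩo hΩb hdC2 hgrad hM hM0 hρ1 hρρ₀ hρe in
lemma partA_super {β : ℝ} (hβ0 : 0 < β) (hβ1 : β < 1)
    (hρK : ρ ≤ (β*(1-β)/(216*M*(1/2+|β|)+1))^2) :
    SuperHarm Ω (1/4) (collar Ω ρ) (fun x => Ff β (bdist Ω x)) := by
  have hK : 0 < β*(1-β) := by nlinarith
  apply superHarm_comp hN hΩo hΩb hdC2 hgrad hM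
    (fun t ht => hasDerivAt_Ff β ht.1 ht.2) (fun t ht => hasDerivAt_Ff1 β ht.1 ht.2)
    (contOn_Ff2 β) hρ1 hρρ₀
  intro t ht
  have ht1 : 0 < t := ht.1
  have hte : t ≤ Real.exp (-1) := le_of_lt (lt_of_lt_of_le ht.2 hρe)
  have hlt1 : t < 1 := lt_of_le_of_lt hte exp_neg_one_lt_one
  have hL0 : (0:ℝ) ≤ -Real.log t := by linarith [one_le_negLog ht1 hte]
  have hX0 : 0 ≤ t ^ (-(3:ℝ)/2) * (-Real.log t) ^ (β-2) :=
    mul_nonneg (Real.rpow_nonneg ht1.le _) (Real.rpow_nonneg hL0 _)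
  rw [keyIdentity β ht1 hlt1]
  exact estimate_chain hM0 (by positivity) hX0 ht1 hte
    (Ff1_bound β (β-2) ht1 hte (by linarith))
    (numer hM0 (by positivity) hK ht1 (le_trans ht.2.le hρK))

include hN hΩo hΩb hdC2 hgrad hM hM0 hρ1 hρρ₀ hρe in
lemma partA_sub {β : ℝ} (hβ : β < 0 ∨ 1 < β)
    (hρK : ρ ≤ (β*(β-1)/(216*M*(1/2+|β|)+1))^2) :
    SubHarm Ω (1/4) (collar Ω ρ) (fun x => Ff β (bdist Ω x)) := by
  have hK : 0 < β*(β-1) := by rcases hβ with h | h <;> nlinarith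
  apply subHarm_comp hN hΩo hΩb hdC2 hgrad hM
    (fun t ht => hasDerivAt_Ff β ht.1 ht.2) (fun t ht => hasDerivAt_Ff1 β ht.1 ht.2)
    (contOn_Ff2 β) hρ1 hρρ₀
  intro t ht
  have ht1 : 0 < t := ht.1
  have hte : t ≤ Real.exp (-1) := le_of_lt (lt_of_lt_of_le ht.2 hρe)
  have hlt1 : t < 1 := lt_of_le_of_lt hte exp_neg_one_lt_one
  have hL0 : (0:ℝ) ≤ -Real.log t := by linarith [one_le_negLog ht1 hte]
  have hX0 : 0 ≤ t ^ (-(3:ℝ)/2) * (-Real.log t) ^ (β-2) :=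
    mul_nonneg (Real.rpow_nonneg ht1.le _) (Real.rpow_nonneg hL0 _)
  have hid := keyIdentity β ht1 hlt1
  have h2 : Ff2 β t + (1/4)/t^2 * Ff β t
      = (β*(β-1)) * (t ^ (-(3:ℝ)/2) * (-Real.log t) ^ (β-2)) := by
    linear_combination -hid
  rw [h2]
  exact estimate_chain hM0 (by positivity) hX0 ht1 hte
    (Ff1_bound β (β-2) ht1 hte (by linarith))
    (numer hM0 (by positivity) hK ht1 (le_trans ht.2.le hρK))

include hN hΩo hΩb hdC2 hgrad hM hM0 hρ1 hρρ₀ hρe in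
lemma partB_super {ε : ℝ} (hε0 : 0 < ε) (hε1 : ε < 1)
    (hρK : ρ ≤ (ε*(1-ε)/(216*M*3+1))^2)
    (b σ g : ℝ) (hb : b = 0 ∨ b = 1) (hσ : σ = 1 ∨ σ = -1) (hg : g = b - ε)
    (hKσ : ε * (1-ε) ≤ σ * (g*(1-g))) :
    SuperHarm Ω (1/4) (collar Ω ρ) (fun x => Ff b (bdist Ω x) + σ * Ff g (bdist Ω x)) := by
  have hK : 0 < ε*(1-ε) := by nlinarith
  apply superHarm_comp hN hΩo hΩb hdC2 hgrad hM
    (f' := fun t => Ff1 b t + σ * Ff1 g t) (f'' := fun t => Ff2 b t + σ * Ff2 g t)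
    (fun t ht => (hasDerivAt_Ff b ht.1 ht.2).fun_add ((hasDerivAt_Ff g ht.1 ht.2).const_mul σ))
    (fun t ht => (hasDerivAt_Ff1 b ht.1 ht.2).fun_add ((hasDerivAt_Ff1 g ht.1 ht.2).const_mul σ))
    ((contOn_Ff2 b).add (continuousOn_const.mul (contOn_Ff2 g))) hρ1 hρρ₀
  intro t ht
  have ht1 : 0 < t := ht.1
  have hte : t ≤ Real.exp (-1) := le_of_lt (lt_of_lt_of_le ht.2 hρe)
  have hlt1 : t < 1 := lt_of_le_of_lt hte exp_neg_one_lt_one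
  have hL0 : (0:ℝ) ≤ -Real.log t := by linarith [one_le_negLog ht1 hte]
  have hX0 : 0 ≤ t ^ (-(3:ℝ)/2) * (-Real.log t) ^ (g-2) :=
    mul_nonneg (Real.rpow_nonneg ht1.le _) (Real.rpow_nonneg hL0 _)
  have hid1 := keyIdentity b ht1 hlt1
  have hid2 := keyIdentity g ht1 hlt1
  have hb0 : b*(1-b) = 0 := by rcases hb with h | h <;> rw [h] <;> ring
  have hRHS : -(Ff2 b t + σ * Ff2 g t) - (1/4)/t^2 * (Ff b t + σ * Ff g t)
      = (σ * (g*(1-g))) * (t ^ (-(3:ℝ)/2) * (-Real.log t) ^ (g-2)) := by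
    linear_combination hid1 + σ * hid2 + (t ^ (-(3:ℝ)/2) * (-Real.log t) ^ (b-2)) * hb0
  rw [hRHS]
  have hchain := estimate_chain hM0 (by norm_num : (0:ℝ) ≤ 3) hX0 ht1 hte
    (Ff1_sum_bound b g σ ht1 hte
      (by rcases hσ with h | h <;> rw [h] <;> norm_num)
      (by rcases hb with h | h <;> rw [h] <;> norm_num)
      (by rw [hg]; rcases hb with h | h <;> rw [h] <;> rw [abs_le] <;> constructor <;> linarith)
      (by rw [hg]; linarith))
    (numer hM0 (by norm_num) hK ht1 (le_trans ht.2.le hρK))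
  exact hchain.trans (mul_le_mul_of_nonneg_right hKσ hX0)

include hN hΩo hΩb hdC2 hgrad hM hM0 hρ1 hρρ₀ hρe in
lemma partB_sub {ε : ℝ} (hε0 : 0 < ε) (hε1 : ε < 1)
    (hρK : ρ ≤ (ε*(1-ε)/(216*M*3+1))^2)
    (b σ g : ℝ) (hb : b = 0 ∨ b = 1) (hσ : σ = 1 ∨ σ = -1) (hg : g = b - ε)
    (hKσ : ε * (1-ε) ≤ -(σ * (g*(1-g)))) :
    SubHarm Ω (1/4) (collar Ω ρ) (fun x => Ff b (bdist Ω x) + σ * Ff g (bdist Ω x)) := by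
  have hK : 0 < ε*(1-ε) := by nlinarith
  apply subHarm_comp hN hΩo hΩb hdC2 hgrad hM
    (f' := fun t => Ff1 b t + σ * Ff1 g t) (f'' := fun t => Ff2 b t + σ * Ff2 g t)
    (fun t ht => (hasDerivAt_Ff b ht.1 ht.2).fun_add ((hasDerivAt_Ff g ht.1 ht.2).const_mul σ))
    (fun t ht => (hasDerivAt_Ff1 b ht.1 ht.2).fun_add ((hasDerivAt_Ff1 g ht.1 ht.2).const_mul σ))
    ((contOn_Ff2 b).add (continuousOn_const.mul (contOn_Ff2 g))) hρ1 hρρ₀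
  intro t ht
  have ht1 : 0 < t := ht.1
  have hte : t ≤ Real.exp (-1) := le_of_lt (lt_of_lt_of_le ht.2 hρe)
  have hlt1 : t < 1 := lt_of_le_of_lt hte exp_neg_one_lt_one
  have hL0 : (0:ℝ) ≤ -Real.log t := by linarith [one_le_negLog ht1 hte]
  have hX0 : 0 ≤ t ^ (-(3:ℝ)/2) * (-Real.log t) ^ (g-2) :=
    mul_nonneg (Real.rpow_nonneg ht1.le _) (Real.rpow_nonneg hL0 _)
  have hid1 := keyIdentity b ht1 hlt1
  have hid2 := keyIdentity g ht1 hlt1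
  have hb0 : b*(1-b) = 0 := by rcases hb with h | h <;> rw [h] <;> ring
  have hRHS : (Ff2 b t + σ * Ff2 g t) + (1/4)/t^2 * (Ff b t + σ * Ff g t)
      = (-(σ * (g*(1-g)))) * (t ^ (-(3:ℝ)/2) * (-Real.log t) ^ (g-2)) := by
    linear_combination -hid1 - σ * hid2 - (t ^ (-(3:ℝ)/2) * (-Real.log t) ^ (b-2)) * hb0
  rw [hRHS]
  have hchain := estimate_chain hM0 (by norm_num : (0:ℝ) ≤ 3) hX0 ht1 hte
    (Ff1_sum_bound b g σ ht1 hte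
      (by rcases hσ with h | h <;> rw [h] <;> norm_num)
      (by rcases hb with h | h <;> rw [h] <;> norm_num)
      (by rw [hg]; rcases hb with h | h <;> rw [h] <;> rw [abs_le] <;> constructor <;> linarith)
      (by rw [hg]; linarith))
    (numer hM0 (by norm_num) hK ht1 (le_trans ht.2.le hρK))
  exact hchain.trans (mul_le_mul_of_nonneg_right hKσ hX0)
end assembly
/-- The case `μ = 1/4`.
(a) For `β ∈ (0,1)` the function `δ^{1/2}(log(1/δ))^β` is a super-harmonic of `L_{1/4}`
on some `Ω_ρ` with `ρ ∈ (0, min{1, ρ₀})`; for `β < 0` or `β > 1` it is a sub-harmonic on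
some such collar.
(b) For every `ε ∈ (0,1)` there is `ρ ∈ (0, min{1, ρ₀})` such that on `Ω_ρ` the functions
`δ^{1/2}(1-(log(1/δ))^{-ε})` and `δ^{1/2}·log(1/δ)·(1+(log(1/δ))^{-ε})` are positive
super-harmonics of `L_{1/4}`, while `δ^{1/2}(1+(log(1/δ))^{-ε})` and
`δ^{1/2}·log(1/δ)·(1-(log(1/δ))^{-ε})` are positive sub-harmonics of `L_{1/4}`. -/
theorem stmt6 {N : ℕ} (hN : 2 ≤ N) (Ω : Set (EuclideanSpace ℝ (Fin N)))
    (hΩo : IsOpen Ω) (hΩne : Ω.Nonempty) (hΩb : Bornology.IsBounded Ω)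
    (ρ₀ : ℝ) (hρ₀ : GoodCollar Ω ρ₀) :
    ((∀ β : ℝ, 0 < β → β < 1 →
        ∃ ρ, 0 < ρ ∧ ρ < min 1 ρ₀ ∧
          SuperHarm Ω (1 / 4) (collar Ω ρ)
            (fun x => bdist Ω x ^ (1 / 2 : ℝ) * Real.log (1 / bdist Ω x) ^ β)) ∧
      (∀ β : ℝ, β < 0 ∨ 1 < β →
        ∃ ρ, 0 < ρ ∧ ρ < min 1 ρ₀ ∧
          SubHarm Ω (1 / 4) (collar Ω ρ)
            (fun x => bdist Ω x ^ (1 / 2 : ℝ) * Real.log (1 / bdist Ω x) ^ β))) ∧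
    (∀ ε : ℝ, 0 < ε → ε < 1 →
      ∃ ρ, 0 < ρ ∧ ρ < min 1 ρ₀ ∧
        (SuperHarm Ω (1 / 4) (collar Ω ρ)
            (fun x => bdist Ω x ^ (1 / 2 : ℝ) * (1 - Real.log (1 / bdist Ω x) ^ (-ε))) ∧
          ∀ x ∈ collar Ω ρ,
            0 < bdist Ω x ^ (1 / 2 : ℝ) * (1 - Real.log (1 / bdist Ω x) ^ (-ε))) ∧
        (SuperHarm Ω (1 / 4) (collar Ω ρ)
            (fun x => bdist Ω x ^ (1 / 2 : ℝ) * Real.log (1 / bdist Ω x) *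
              (1 + Real.log (1 / bdist Ω x) ^ (-ε))) ∧
          ∀ x ∈ collar Ω ρ,
            0 < bdist Ω x ^ (1 / 2 : ℝ) * Real.log (1 / bdist Ω x) *
              (1 + Real.log (1 / bdist Ω x) ^ (-ε))) ∧
        (SubHarm Ω (1 / 4) (collar Ω ρ)
            (fun x => bdist Ω x ^ (1 / 2 : ℝ) * (1 + Real.log (1 / bdist Ω x) ^ (-ε))) ∧
          ∀ x ∈ collar Ω ρ,
            0 < bdist Ω x ^ (1 / 2 : ℝ) * (1 + Real.log (1 / bdist Ω x) ^ (-ε))) ∧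
        (SubHarm Ω (1 / 4) (collar Ω ρ)
            (fun x => bdist Ω x ^ (1 / 2 : ℝ) * Real.log (1 / bdist Ω x) *
              (1 - Real.log (1 / bdist Ω x) ^ (-ε))) ∧
          ∀ x ∈ collar Ω ρ,
            0 < bdist Ω x ^ (1 / 2 : ℝ) * Real.log (1 / bdist Ω x) *
              (1 - Real.log (1 / bdist Ω x) ^ (-ε)))) := by
  obtain ⟨hρ₀pos, hdC2, hgrad, M₀, hM₀⟩ := hρ₀
  set M := max M₀ 0 with hMdef
  have hM : ∀ x ∈ collar Ω ρ₀, |lap (bdist Ω) x| ≤ M :=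
    fun x hx => (hM₀ x hx).trans (le_max_left _ _)
  have hM0 : (0:ℝ) ≤ M := le_max_right _ _
  refine ⟨⟨?_, ?_⟩, ?_⟩
  · -- (a) super
    intro β hβ0 hβ1
    obtain ⟨ρ, hρpos, hρlt, hρ1, hρρ₀, hρe, hρK⟩ :=
      pick_rho (K := β*(1-β)) (M := M) (c := 1/2+|β|) hρ₀pos (by nlinarith) hM0 (by positivity)
    refine ⟨ρ, hρpos, hρlt, ?_⟩
    have heq : Set.EqOn (fun x => bdist Ω x ^ (1/2:ℝ) * Real.log (1/bdist Ω x) ^ β)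
        (fun x => Ff β (bdist Ω x)) (collar Ω ρ) := fun x _ => by
      simp only [Ff]
      rw [show Real.log (1/bdist Ω x) = -Real.log (bdist Ω x) by rw [one_div, Real.log_inv]]
    exact superHarm_congr (collar_isOpen Ω hΩo ρ) heq
      (partA_super hN hΩo hΩb hdC2 hgrad hM hM0 hρ1 hρρ₀ hρe hβ0 hβ1 hρK)
  · -- (a) sub
    intro β hβ
    have hK : 0 < β*(β-1) := by rcases hβ with h|h <;> nlinarith
    obtain ⟨ρ, hρpos, hρlt, hρ1, hρρ₀, hρe, hρK⟩ :=
      pick_rho (K := β*(β-1)) (M := M) (c := 1/2+|β|) hρ₀pos hK hM0 (by positivity)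
    refine ⟨ρ, hρpos, hρlt, ?_⟩
    have heq : Set.EqOn (fun x => bdist Ω x ^ (1/2:ℝ) * Real.log (1/bdist Ω x) ^ β)
        (fun x => Ff β (bdist Ω x)) (collar Ω ρ) := fun x _ => by
      simp only [Ff]
      rw [show Real.log (1/bdist Ω x) = -Real.log (bdist Ω x) by rw [one_div, Real.log_inv]]
    exact subHarm_congr (collar_isOpen Ω hΩo ρ) heq
      (partA_sub hN hΩo hΩb hdC2 hgrad hM hM0 hρ1 hρρ₀ hρe hβ hρK)
  · -- (b)
    intro ε hε0 hε1
    obtain ⟨ρ, hρpos, hρlt, hρ1, hρρ₀, hρe, hρK⟩ :=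
      pick_rho (K := ε*(1-ε)) (M := M) (c := 3) hρ₀pos (by nlinarith) hM0 (by norm_num)
    have hOpen := collar_isOpen Ω hΩo ρ
    have hfacts : ∀ x ∈ collar Ω ρ, 0 < bdist Ω x ∧ 1 < -Real.log (bdist Ω x) ∧
        Real.log (1/bdist Ω x) = -Real.log (bdist Ω x) := by
      intro x hx
      have ht0 : 0 < bdist Ω x := bdist_pos hN Ω hΩo hΩb hx.1
      have hte : bdist Ω x < Real.exp (-1) := lt_of_lt_of_le hx.2 hρe
      have hL1 : 1 < -Real.log (bdist Ω x) := by
        have := Real.log_lt_log ht0 hte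
        rw [Real.log_exp] at this
        linarith
      exact ⟨ht0, hL1, by rw [one_div, Real.log_inv]⟩
    refine ⟨ρ, hρpos, hρlt, ⟨?_, ?_⟩, ⟨?_, ?_⟩, ⟨?_, ?_⟩, ⟨?_, ?_⟩⟩
    · -- super: δ^{1/2}(1 - L^{-ε})
      have heq : Set.EqOn (fun x => bdist Ω x ^ (1/2:ℝ) * (1 - Real.log (1/bdist Ω x) ^ (-ε)))
          (fun x => Ff 0 (bdist Ω x) + (-1) * Ff (-ε) (bdist Ω x)) (collar Ω ρ) := fun x hx => by
        obtain ⟨_, _, hlog⟩ := hfacts x hx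
        simp only [Ff]
        rw [hlog, Real.rpow_zero]
        ring
      exact superHarm_congr hOpen heq
        (partB_super hN hΩo hΩb hdC2 hgrad hM hM0 hρ1 hρρ₀ hρe hε0 hε1 hρK
          0 (-1) (-ε) (Or.inl rfl) (Or.inr rfl) (by ring) (by nlinarith))
    · intro x hx
      obtain ⟨ht0, hL1, hlog⟩ := hfacts x hx
      rw [hlog]
      have h2 : (-Real.log (bdist Ω x)) ^ (-ε) < 1 :=
        Real.rpow_lt_one_of_one_lt_of_neg hL1 (by linarith)
      exact mul_pos (Real.rpow_pos_of_pos ht0 _) (by linarith)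
    · -- super: δ^{1/2} L (1 + L^{-ε})
      have heq : Set.EqOn (fun x => bdist Ω x ^ (1/2:ℝ) * Real.log (1/bdist Ω x) *
            (1 + Real.log (1/bdist Ω x) ^ (-ε)))
          (fun x => Ff 1 (bdist Ω x) + 1 * Ff (1-ε) (bdist Ω x)) (collar Ω ρ) := fun x hx => by
        obtain ⟨ht0, hL1, hlog⟩ := hfacts x hx
        have hL0 : (0:ℝ) < -Real.log (bdist Ω x) := by linarith
        simp only [Ff]
        rw [hlog, Real.rpow_one,
          show (-Real.log (bdist Ω x)) ^ ((1:ℝ)-ε)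
            = (-Real.log (bdist Ω x)) * (-Real.log (bdist Ω x)) ^ (-ε) by
          rw [show (1:ℝ)-ε = 1 + -ε by ring, Real.rpow_add hL0, Real.rpow_one]]
        ring
      exact superHarm_congr hOpen heq
        (partB_super hN hΩo hΩb hdC2 hgrad hM hM0 hρ1 hρρ₀ hρe hε0 hε1 hρK
          1 1 (1-ε) (Or.inr rfl) (Or.inl rfl) (by ring) (by nlinarith))
    · intro x hx
      obtain ⟨ht0, hL1, hlog⟩ := hfacts x hx
      rw [hlog]
      have h2 : (0:ℝ) < (-Real.log (bdist Ω x)) ^ (-ε) :=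
        Real.rpow_pos_of_pos (by linarith) _
      exact mul_pos (mul_pos (Real.rpow_pos_of_pos ht0 _) (by linarith)) (by linarith)
    · -- sub: δ^{1/2}(1 + L^{-ε})
      have heq : Set.EqOn (fun x => bdist Ω x ^ (1/2:ℝ) * (1 + Real.log (1/bdist Ω x) ^ (-ε)))
          (fun x => Ff 0 (bdist Ω x) + 1 * Ff (-ε) (bdist Ω x)) (collar Ω ρ) := fun x hx => by
        obtain ⟨_, _, hlog⟩ := hfacts x hx
        simp only [Ff]
        rw [hlog, Real.rpow_zero]
        ring
      exact subHarm_congr hOpen heq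
        (partB_sub hN hΩo hΩb hdC2 hgrad hM hM0 hρ1 hρρ₀ hρe hε0 hε1 hρK
          0 1 (-ε) (Or.inl rfl) (Or.inl rfl) (by ring) (by nlinarith))
    · intro x hx
      obtain ⟨ht0, hL1, hlog⟩ := hfacts x hx
      rw [hlog]
      have h2 : (0:ℝ) < (-Real.log (bdist Ω x)) ^ (-ε) :=
        Real.rpow_pos_of_pos (by linarith) _
      exact mul_pos (Real.rpow_pos_of_pos ht0 _) (by linarith)
    · -- sub: δ^{1/2} L (1 - L^{-ε})
      have heq : Set.EqOn (fun x => bdist Ω x ^ (1/2:ℝ) * Real.log (1/bdist Ω x) *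
            (1 - Real.log (1/bdist Ω x) ^ (-ε)))
          (fun x => Ff 1 (bdist Ω x) + (-1) * Ff (1-ε) (bdist Ω x)) (collar Ω ρ) := fun x hx => by
        obtain ⟨ht0, hL1, hlog⟩ := hfacts x hx
        have hL0 : (0:ℝ) < -Real.log (bdist Ω x) := by linarith
        simp only [Ff]
        rw [hlog, Real.rpow_one,
          show (-Real.log (bdist Ω x)) ^ ((1:ℝ)-ε)
            = (-Real.log (bdist Ω x)) * (-Real.log (bdist Ω x)) ^ (-ε) by
          rw [show (1:ℝ)-ε = 1 + -ε by ring, Real.rpow_add hL0, Real.rpow_one]]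
        ring
      exact subHarm_congr hOpen heq
        (partB_sub hN hΩo hΩb hdC2 hgrad hM hM0 hρ1 hρρ₀ hρe hε0 hε1 hρK
          1 (-1) (1-ε) (Or.inr rfl) (Or.inr rfl) (by ring) (by nlinarith))
    · intro x hx
      obtain ⟨ht0, hL1, hlog⟩ := hfacts x hx
      rw [hlog]
      have h2 : (-Real.log (bdist Ω x)) ^ (-ε) < 1 :=
        Real.rpow_lt_one_of_one_lt_of_neg hL1 (by linarith)
      exact mul_pos (mul_pos (Real.rpow_pos_of_pos ht0 _) (by linarith)) (by linarith)
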